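/- In the symmetric inverse monoid I_ℕ with the topology generated by the sets {h : (x,y) ∈ h}, {h : x ∉ dom h}, {h : x ∉ im h} (x, y ∈ ℕ), every basic open set of the form U = {f ∈ I_ℕ : f↾n = h and im(f) ∩ X = ∅}, where n ∈ ℕ, X ⊆ ℕ is finite, and h : a subset of {0,…,n−1} → ℕ \ X is a partial injection, is closed in the topology I₂ generated by {h : (x,y) ∈ h} and {h : x ∉ dom h}, but is not compact in I₂: the open cover consisting of the sets {f : f(n) = m} for m ∈ ℕ together with {f : n ∉ dom f} has no finite subcover of U when U is nonempty and infinite. -/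

import Mathlib

open Set Classical

noncomputable section

/-- A partial injection (partial bijection) on ℕ, viewed as a set of pairs. -/
def IsPInj (g : Set (ℕ × ℕ)) : Prop :=
  ∀ ⦃a b c d : ℕ⦄, (a, b) ∈ g → (c, d) ∈ g → (a = c ↔ b = d)

/-- Domain of a partial injection. -/
def pdom (g : Set (ℕ × ℕ)) : Set ℕ := {x | ∃ y, (x, y) ∈ g}

/-- Image of a partial injection. -/
def pim (g : Set (ℕ × ℕ)) : Set ℕ := {y | ∃ x, (x, y) ∈ g}

/-- Restriction of a partial injection to `{0, …, r-1}`. -/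
def pres (g : Set (ℕ × ℕ)) (r : ℕ) : Set (ℕ × ℕ) := {p ∈ g | p.1 < r}

/-- A waning function `f : ω + 1 → ω + 1`. -/
def Waning (f : ℕ∞ → ℕ∞) : Prop :=
  Antitone f ∧
    ((∀ i, f i = ⊤) ∨
      ((∃ i : ℕ, f i ≠ ⊤) ∧
        ∀ j : ℕ, f j ≠ 0 → f j ≠ ⊤ → f ((j + 1 : ℕ)) < f j))

/-- The symmetric inverse monoid `I_ℕ` as a type: partial bijections on `ℕ`. -/
def PB : Type := {g : Set (ℕ × ℕ) // IsPInj g}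

/-- `U_{x,y} = {h : (x,y) ∈ h}`. -/
def Uxy (x y : ℕ) : Set PB := {h | (x, y) ∈ h.1}

/-- `W_x = {h : x ∉ dom h}`. -/
def Wlow (x : ℕ) : Set PB := {h | x ∉ pdom h.1}

/-- The subbasis for the topology `I₂`. -/
def I2sub : Set (Set PB) := {S | ∃ x y, S = Uxy x y} ∪ {S | ∃ x, S = Wlow x}

/-- The topology `I₂` on `I_ℕ`. -/
def I2 : TopologicalSpace PB := .generateFrom I2sub

/-- `U_{f,n,X} = {g : |im(g) \ X| ≥ n and |X ∩ im(g)| ≤ f(n)}`. -/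
def UfnX (f : ℕ∞ → ℕ∞) (n : ℕ) (X : Finset ℕ) : Set PB :=
  {g | (n : ℕ∞) ≤ (pim g.1 \ ↑X).encard ∧ ((↑X : Set ℕ) ∩ pim g.1).encard ≤ f n}

/-- The topology `T_f`: the least topology containing `I₂` and all the sets `U_{f,n,X}`. -/
def Tw (f : ℕ∞ → ℕ∞) : TopologicalSpace PB :=
  .generateFrom (I2sub ∪ {S | ∃ n X, S = UfnX f n X})

/-- Every basic `I₄`-open set `U = {f : f↾n = h₀ and im(f) ∩ X = ∅}` (where `h₀` is a
partial injection from a subset of `{0,…,n-1}` into `ℕ \ X`) is closed in `I₂`, but not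
compact in `I₂`: when `U` is nonempty and infinite, the open cover consisting of the sets
`{f : (n,m) ∈ f}` for `m ∈ ℕ` together with `{f : n ∉ dom f}` has no finite subcover. -/
theorem basic_open_closed_not_compact (n : ℕ) (X : Finset ℕ)
    (h0 : Set (ℕ × ℕ)) (hh0 : IsPInj h0)
    (hdom : ∀ p ∈ h0, (p : ℕ × ℕ).1 < n) (him : ∀ p ∈ h0, (p : ℕ × ℕ).2 ∉ X) :
    @IsClosed PB I2 {f : PB | pres f.1 n = h0 ∧ pim f.1 ∩ ↑X = ∅} ∧
    ({f : PB | pres f.1 n = h0 ∧ pim f.1 ∩ ↑X = ∅}.Nonempty →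
     {f : PB | pres f.1 n = h0 ∧ pim f.1 ∩ ↑X = ∅}.Infinite →
      (¬ @IsCompact PB I2 {f : PB | pres f.1 n = h0 ∧ pim f.1 ∩ ↑X = ∅} ∧
       ∀ M : Finset ℕ,
        ¬ ({f : PB | pres f.1 n = h0 ∧ pim f.1 ∩ ↑X = ∅} ⊆
            (⋃ m ∈ M, {f : PB | (n, m) ∈ f.1}) ∪ {f : PB | n ∉ pdom f.1}))) := by
  classical
  letI : TopologicalSpace PB := I2
  set U : Set PB := {f : PB | pres f.1 n = h0 ∧ pim f.1 ∩ ↑X = ∅} with hUdef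
  -- basic open sets are open in I2
  have hUxy_open : ∀ x y : ℕ, IsOpen (Uxy x y) := fun x y =>
    TopologicalSpace.GenerateOpen.basic _ (Or.inl ⟨x, y, rfl⟩)
  have hW_open : ∀ x : ℕ, IsOpen (Wlow x) := fun x =>
    TopologicalSpace.GenerateOpen.basic _ (Or.inr ⟨x, rfl⟩)
  -- the key construction for non-compactness
  have hfin : h0.Finite := by
    have himg : (Prod.fst '' h0).Finite := by
      apply Set.Finite.subset (Finset.range n).finite_toSet
      rintro a ⟨p, hp, rfl⟩
      simp [hdom p hp]
    refine Set.Finite.of_finite_image himg ?_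
    rintro ⟨a, b⟩ hp ⟨c, d⟩ hq h1
    simp only at h1
    have := (hh0 hp hq).mp h1
    simp [Prod.ext_iff, h1, this]
  have key : ∀ M : Finset ℕ,
      ¬ (U ⊆ (⋃ m ∈ M, {f : PB | (n, m) ∈ f.1}) ∪ {f : PB | n ∉ pdom f.1}) := by
    intro M hsub
    have hpimfin : (pim h0).Finite := by
      have : pim h0 = Prod.snd '' h0 := by
        ext b; constructor
        · rintro ⟨a, ha⟩; exact ⟨(a, b), ha, rfl⟩
        · rintro ⟨⟨a, b⟩, hp, rfl⟩; exact ⟨a, hp⟩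
      rw [this]; exact hfin.image _
    obtain ⟨y, hy⟩ := ((X.finite_toSet.union M.finite_toSet).union hpimfin).infinite_compl.nonempty
    simp only [Set.mem_compl_iff, Set.mem_union, not_or] at hy
    obtain ⟨⟨hyX, hyM⟩, hypim⟩ := hy
    set g : Set (ℕ × ℕ) := insert (n, y) h0 with hgdef
    have hg : IsPInj g := by
      rintro a b c d hab hcd
      rcases hab with hab | hab <;> rcases hcd with hcd | hcd
      · rw [Prod.ext_iff] at hab hcd
        obtain ⟨rfl, rfl⟩ := hab; obtain ⟨rfl, rfl⟩ := hcd; simp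
      · injection hab with ha1 ha2
        have h1 : c < n := hdom _ hcd
        have h2 : d ∈ pim h0 := ⟨c, hcd⟩
        constructor
        · intro h; omega
        · intro h; rw [← h, ha2] at h2; exact absurd h2 hypim
      · injection hcd with hc1 hc2
        have h1 : a < n := hdom _ hab
        have h2 : b ∈ pim h0 := ⟨a, hab⟩
        constructor
        · intro h; omega
        · intro h; rw [h, hc2] at h2; exact absurd h2 hypim
      · exact hh0 hab hcd
    have hgU : (⟨g, hg⟩ : PB) ∈ U := by
      constructor
      · ext ⟨a, b⟩
        simp only [pres, Set.mem_setOf_eq, hgdef, Set.mem_insert_iff, Prod.ext_iff]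
        constructor
        · rintro ⟨h | h, hlt⟩
          · exact absurd hlt (by simp [h.1])
          · exact h
        · intro h; exact ⟨Or.inr h, hdom _ h⟩
      · ext b
        simp only [Set.mem_inter_iff, Set.mem_empty_iff_false, iff_false, not_and]
        rintro ⟨a, ha | ha⟩
        · rw [Prod.ext_iff] at ha; obtain ⟨-, rfl⟩ := ha; exact hyX
        · exact him _ ha
    have := hsub hgU
    rcases this with h | h
    · obtain ⟨m, hm, hnm⟩ := Set.mem_iUnion₂.mp h
      rcases hnm with hnm | hnm
      · rw [Prod.ext_iff] at hnm; obtain ⟨-, h2⟩ := hnm; subst h2; exact hyM hm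
      · exact absurd (hdom _ hnm) (lt_irrefl n)
    · exact h ⟨y, Or.inl rfl⟩
  refine ⟨?_, fun _ _ => ⟨?_, key⟩⟩
  · -- closedness
    rw [← isOpen_compl_iff, isOpen_iff_forall_mem_open]
    intro f hf
    simp only [Set.mem_compl_iff, hUdef, Set.mem_setOf_eq, not_and_or] at hf
    rcases hf with hf | hf
    · -- restriction differs
      rw [Set.ext_iff] at hf
      push_neg at hf
      obtain ⟨⟨x, y⟩, hp⟩ := hf
      rcases hp with ⟨⟨hxyf, hxlt⟩, hxy0⟩ | ⟨hnotres, hxy0⟩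
      · 
        refine ⟨Uxy x y, ?_, hUxy_open x y, hxyf⟩
        intro g hg
        simp only [Set.mem_compl_iff, hUdef, Set.mem_setOf_eq, not_and_or]
        left
        intro heq
        exact hxy0 (heq ▸ ⟨hg, hxlt⟩)
      · have hxlt : x < n := hdom _ hxy0
        by_cases hx : x ∈ pdom f.1
        · obtain ⟨y', hy'⟩ := hx
          refine ⟨Uxy x y', ?_, hUxy_open x y', hy'⟩
          intro g hg
          simp only [Set.mem_compl_iff, hUdef, Set.mem_setOf_eq, not_and_or]
          left
          intro heq
          have hxy_in : (x, y) ∈ g.1 := by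
            have : (x, y) ∈ pres g.1 n := heq ▸ hxy0
            exact this.1
          have hyy' : y' = y := (g.2 hg hxy_in).mp rfl
          have : (x, y) ∈ pres f.1 n := ⟨hyy' ▸ hy', hxlt⟩
          exact hnotres this
        · refine ⟨Wlow x, ?_, hW_open x, hx⟩
          intro g hg
          simp only [Set.mem_compl_iff, hUdef, Set.mem_setOf_eq, not_and_or]
          left
          intro heq
          have : (x, y) ∈ pres g.1 n := heq ▸ hxy0
          exact hg ⟨y, this.1⟩
    · -- image meets X
      have : (pim f.1 ∩ ↑X).Nonempty := Set.nonempty_iff_ne_empty.mpr hf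
      obtain ⟨b, ⟨a, hab⟩, hbX⟩ := this
      refine ⟨Uxy a b, ?_, hUxy_open a b, hab⟩
      intro g hg
      simp only [Set.mem_compl_iff, hUdef, Set.mem_setOf_eq, not_and_or]
      right
      intro heq
      have : b ∈ pim g.1 ∩ ↑X := ⟨⟨a, hg⟩, hbX⟩
      rw [heq] at this
      exact this
  · -- not compact
    intro hc
    set c : Option ℕ → Set PB := fun o => o.elim {f : PB | n ∉ pdom f.1} (fun m => Uxy n m)
      with hcdef
    have hcopen : ∀ o, IsOpen (c o) := by
      rintro (_ | m)
      · exact hW_open n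
      · exact hUxy_open n m
    have hccov : U ⊆ ⋃ o, c o := by
      intro f _
      by_cases hx : n ∈ pdom f.1
      · obtain ⟨m, hm⟩ := hx
        exact Set.mem_iUnion.mpr ⟨some m, hm⟩
      · exact Set.mem_iUnion.mpr ⟨none, hx⟩
    obtain ⟨t, ht⟩ := hc.elim_finite_subcover c hcopen hccov
    apply key (t.image fun o => o.getD 0)
    intro f hf
    have := ht hf
    simp only [Set.mem_iUnion] at this
    obtain ⟨o, hot, hfo⟩ := this
    rcases o with _ | m
    · exact Or.inr hfo
    · left
      simp only [Set.mem_iUnion, Set.mem_setOf_eq]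
      exact ⟨m, Finset.mem_image.mpr ⟨some m, hot, rfl⟩, hfo⟩
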